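/- Let $a : \mathbb{R}^n \to \mathbb{R}$ be an affine map $a(x) = c + v \cdot x$ with $(c,v) \neq 0$, and let $B = B(0,1) \subset \mathbb{R}^n$ be the unit ball. Then there is a universal constant $C_0 \geq 1$ (depending only on $n$) such that for all $t > 0$, $|\{x \in B : |a(x)| \leq t\}| \leq \frac{C_0 t}{|c| + |v|}$. -/

import Mathlib

open MeasureTheory Metric Set
open scoped ENNReal RealInnerProductSpace

lemma aux_coord_le_norm {n : ℕ} (y : EuclideanSpace ℝ (Fin n)) (i : Fin n) :
    |y i| ≤ ‖y‖ := by
  rw [EuclideanSpace.norm_eq]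
  have h1 : |y i| = Real.sqrt (|y i| ^ 2) := by
    rw [Real.sqrt_sq_eq_abs, abs_abs]
  rw [h1]
  apply Real.sqrt_le_sqrt
  exact Finset.single_le_sum (f := fun j => |y j| ^ 2) (fun j _ => by positivity)
    (Finset.mem_univ i)

lemma aux_pi_bound {n : ℕ} {E : Type*} [MeasurableSpace E] (μ : Measure E)
    (ψ : E → (Fin n → ℝ)) (hψ : MeasurePreserving ψ μ volume)
    (g : Fin n → Set ℝ) (hg : ∀ i, MeasurableSet (g i))
    (S : Set E) (hS : ∀ x ∈ S, ∀ i, ψ x i ∈ g i) :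
    μ S ≤ ∏ i, volume (g i) := by
  have hT : MeasurableSet (Set.pi Set.univ g) := MeasurableSet.univ_pi hg
  calc μ S ≤ μ (ψ ⁻¹' Set.pi Set.univ g) :=
        measure_mono (fun x hx i _ => hS x hx i)
    _ = volume (Set.pi Set.univ g) := hψ.measure_preimage hT.nullMeasurableSet
    _ = ∏ i, volume (g i) := volume_pi_pi g

theorem statement1 (n : ℕ) :
    ∃ C₀ : ℝ, 1 ≤ C₀ ∧
      ∀ (c : ℝ) (v : EuclideanSpace ℝ (Fin n)), (c, v) ≠ 0 →
        ∀ t : ℝ, 0 < t →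
          volume {x ∈ ball (0 : EuclideanSpace ℝ (Fin n)) 1 | abs (c + ⟪v, x⟫) ≤ t}
            ≤ ENNReal.ofReal (C₀ * t / (|c| + ‖v‖)) := by
  have h2n : (1:ℝ) ≤ 2 ^ n := one_le_pow₀ (by norm_num : (1:ℝ) ≤ 2)
  refine ⟨3 * 2 ^ n, by linarith, ?_⟩
  intro c v hcv t ht
  set S := {x ∈ ball (0 : EuclideanSpace ℝ (Fin n)) 1 | |c + ⟪v, x⟫| ≤ t} with hSdef
  rcases S.eq_empty_or_nonempty with hemp | ⟨x₀, hx₀⟩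
  · rw [hemp]; simp
  have hx₀b : ‖x₀‖ ≤ 1 := by
    have := hx₀.1
    rw [mem_ball_zero_iff] at this
    linarith
  have hx₀t : |c + ⟪v, x₀⟫| ≤ t := hx₀.2
  have hinner : |⟪v, x₀⟫| ≤ ‖v‖ := by
    calc |⟪v, x₀⟫| ≤ ‖v‖ * ‖x₀‖ := abs_real_inner_le_norm v x₀
      _ ≤ ‖v‖ * 1 := mul_le_mul_of_nonneg_left hx₀b (norm_nonneg v)
      _ = ‖v‖ := mul_one _
  have hcle : |c| ≤ t + ‖v‖ := by
    have : |c| ≤ |c + ⟪v, x₀⟫| + |⟪v, x₀⟫| := by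
      have := abs_sub (c + ⟪v, x₀⟫) ⟪v, x₀⟫
      simpa using this
    linarith
  -- cube bound, always valid
  have hcube : volume S ≤ ENNReal.ofReal (2 ^ n) := by
    have := aux_pi_bound volume ((MeasurableEquiv.toLp 2 (Fin n → ℝ)).symm)
      (EuclideanSpace.volume_preserving_symm_measurableEquiv_toLp (Fin n))
      (fun _ => Icc (-1) 1) (fun _ => measurableSet_Icc) S ?_
    · refine this.trans ?_
      simp only [Real.volume_Icc, Finset.prod_const, Finset.card_univ, Fintype.card_fin]
      rw [← ENNReal.ofReal_pow (by norm_num)]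
      norm_num
    · intro x hx i
      have h1 : ‖x‖ < 1 := mem_ball_zero_iff.mp hx.1
      have h2 : |((MeasurableEquiv.toLp 2 (Fin n → ℝ)).symm x) i| ≤ ‖x‖ := aux_coord_le_norm x i
      have := abs_le.mp (h2.trans h1.le)
      exact ⟨this.1, this.2⟩
  by_cases hv : v = 0
  · -- v = 0 case
    have hc : c ≠ 0 := by
      intro h; exact hcv (by simp [h, hv, Prod.ext_iff])
    have hc0 : 0 < |c| := abs_pos.mpr hc
    have hct : |c| ≤ t := by
      rw [hv] at hcle; simpa using hcle
    refine hcube.trans (ENNReal.ofReal_le_ofReal ?_)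
    rw [hv, norm_zero, add_zero, le_div_iff₀ hc0]
    nlinarith
  · -- v ≠ 0 case
    have hvn : 0 < ‖v‖ := norm_pos_iff.mpr hv
    have hD : 0 < |c| + ‖v‖ := by positivity
    rcases le_total ‖v‖ t with hvt | htv
    · -- t ≥ ‖v‖ : use cube bound
      refine hcube.trans (ENNReal.ofReal_le_ofReal ?_)
      rw [le_div_iff₀ hD]
      nlinarith
    · -- t ≤ ‖v‖ : use slab bound
      have hn : 0 < n := by
        rcases Nat.eq_zero_or_pos n with h | h
        · subst h; exact absurd (Subsingleton.elim v 0) hv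
        · exact h
      set k0 : Fin n := ⟨0, hn⟩
      set u : EuclideanSpace ℝ (Fin n) := ‖v‖⁻¹ • v with hu
      have hun : ‖u‖ = 1 := norm_smul_inv_norm hv
      have hON : Orthonormal ℝ (({k0} : Set (Fin n)).restrict (fun _ => u)) := by
        constructor
        · intro i; exact hun
        · intro i j hij
          exact absurd (Subtype.ext ((Set.mem_singleton_iff.mp i.2).trans
            (Set.mem_singleton_iff.mp j.2).symm)) hij
      obtain ⟨b, hb⟩ := hON.exists_orthonormalBasis_extension_of_card_eq
        (by simp [finrank_euclideanSpace]) 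
      have hbk0 : b k0 = u := hb k0 rfl
      have hrepr : ∀ x : EuclideanSpace ℝ (Fin n), ⟪v, x⟫ = ‖v‖ * b.repr x k0 := by
        intro x
        rw [b.repr_apply_apply, hbk0, hu, real_inner_smul_left]
        field_simp
      set g : Fin n → Set ℝ := fun i =>
        if i = k0 then Icc ((-c - t) / ‖v‖) ((-c + t) / ‖v‖) else Icc (-1) 1 with hg
      have hbound := aux_pi_bound volume
        (fun x => ((MeasurableEquiv.toLp 2 (Fin n → ℝ)).symm) (b.repr x))
        ((EuclideanSpace.volume_preserving_symm_measurableEquiv_toLp (Fin n)).comp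
          b.measurePreserving_repr)
        g (fun i => by by_cases h : i = k0 <;> simp [hg, h, measurableSet_Icc]) S ?_
      · refine hbound.trans ?_
        have ha : (-c + t) / ‖v‖ - (-c - t) / ‖v‖ = 2 * t / ‖v‖ := by
          rw [div_sub_div_same]; ring_nf
        have hprod : ∏ i, volume (g i) =
            ENNReal.ofReal (2 * t / ‖v‖) * ENNReal.ofReal 2 ^ (n - 1) := by
          rw [← Finset.mul_prod_erase Finset.univ _ (Finset.mem_univ k0)]
          congr 1
          · simp [hg, Real.volume_Icc, ha]
          · rw [Finset.prod_congr rfl (fun i hi => ?_), Finset.prod_const,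
              Finset.card_erase_of_mem (Finset.mem_univ k0), Finset.card_univ,
              Fintype.card_fin]
            have : i ≠ k0 := Finset.ne_of_mem_erase hi
            simp [hg, this, Real.volume_Icc]
            norm_num
        rw [hprod, ← ENNReal.ofReal_pow (by norm_num), ← ENNReal.ofReal_mul (by positivity)]
        refine ENNReal.ofReal_le_ofReal ?_
        rw [div_mul_eq_mul_div, div_le_div_iff₀ hvn hD]
        have h2n1 : (2:ℝ) * 2 ^ (n - 1) = 2 ^ n := by
          rw [← pow_succ']
          congr 1
          omega
        have hcv2 : |c| + ‖v‖ ≤ 3 * ‖v‖ := by linarith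
        have h2pos : (0:ℝ) < 2 ^ (n-1) := by positivity
        calc 2 * t * 2 ^ (n - 1) * (|c| + ‖v‖) 
            = (2 * 2 ^ (n-1)) * t * (|c| + ‖v‖) := by ring
          _ ≤ (2 * 2 ^ (n-1)) * t * (3 * ‖v‖) := by
              have : (0:ℝ) < 2 * 2 ^ (n-1) := by positivity
              gcongr
          _ = 3 * 2 ^ n * t / 1 * ‖v‖ := by rw [← h2n1]; ring
          _ = 3 * 2 ^ n * t * ‖v‖ := by ring
      · intro x hx i
        have hco : ((MeasurableEquiv.toLp 2 (Fin n → ℝ)).symm) (b.repr x) i = b.repr x i := rfl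
        by_cases h : i = k0
        · have h1 : |c + ‖v‖ * b.repr x k0| ≤ t := by
            rw [← hrepr x]; exact hx.2
          have h2 := abs_le.mp h1
          have hco' : ((MeasurableEquiv.toLp 2 (Fin n → ℝ)).symm) (b.repr x) k0
              = b.repr x k0 := rfl
          simp only [hg, if_pos h, Set.mem_Icc, hco, h]
          rw [hco']
          constructor
          · rw [div_le_iff₀ hvn]
            nlinarith [h2.1]
          · rw [le_div_iff₀ hvn]
            nlinarith [h2.2]
        · have h1 : ‖x‖ < 1 := mem_ball_zero_iff.mp hx.1
          have h2 : |((MeasurableEquiv.toLp 2 (Fin n → ℝ)).symm) (b.repr x) i| ≤ ‖b.repr x‖ :=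
            aux_coord_le_norm (b.repr x) i
          rw [b.repr.norm_map] at h2
          have h3 := abs_le.mp (h2.trans h1.le)
          simp only [hg, if_neg h, Set.mem_Icc]
          exact h3
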